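/- There exist a real Banach space E and a sequence (xₙ) in E converging to 0 such that the set S = {xₙ : n ∈ ℕ} is not contained in any ellipsoid of E; that is, for every real Hilbert space H and every continuous linear map T : H → E, S is not contained in the image T(B_H) of the closed unit ball B_H of H. -/

import Mathlib

open Filter Finset
open scoped ENNReal

/-- Sign choice lemma via the parallelogram law. -/
lemma exists_signs {H : Type} [NormedAddCommGroup H] [InnerProductSpace ℝ H]
    (h : ℕ → H) (N : ℕ) :
    ∃ ε : ℕ → ℝ, (∀ i, ε i = 1 ∨ ε i = -1) ∧
      ‖∑ i ∈ range N, ε i • h i‖ ^ 2 ≤ ∑ i ∈ range N, ‖h i‖ ^ 2 := by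
  induction N with
  | zero => exact ⟨fun _ => 1, fun _ => Or.inl rfl, by simp⟩
  | succ N ih =>
    obtain ⟨ε, hε, hle⟩ := ih
    set a := ∑ i ∈ range N, ε i • h i with ha
    set σ : ℝ := if (inner ℝ a (h N) : ℝ) ≤ 0 then 1 else -1 with hσ
    have hσ1 : σ = 1 ∨ σ = -1 := by rw [hσ]; split <;> simp
    have hkey : σ * (inner ℝ a (h N) : ℝ) ≤ 0 := by
      rw [hσ]
      split
      · simpa using ‹_›
      · nlinarith [not_le.mp ‹¬ (inner ℝ a (h N) : ℝ) ≤ 0›]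
    set ε' : ℕ → ℝ := fun i => if i = N then σ else ε i with hε'
    have hε'1 : ∀ i, ε' i = 1 ∨ ε' i = -1 := by
      intro i
      rw [hε']
      by_cases hi : i = N
      · simp only [if_pos hi]; exact hσ1
      · simp only [if_neg hi]; exact hε i
    refine ⟨ε', hε'1, ?_⟩
    have hre : ∑ i ∈ range N, ε' i • h i = a := by
      rw [ha]
      refine Finset.sum_congr rfl fun i hi => ?_
      rw [hε']
      simp only [if_neg (Finset.mem_range.mp hi).ne]
    have hεN : ε' N = σ := by rw [hε']; simp
    rw [Finset.sum_range_succ, hre, hεN]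
    have expand : ‖a + σ • h N‖ ^ 2
        = ‖a‖ ^ 2 + 2 * (σ * (inner ℝ a (h N) : ℝ)) + σ ^ 2 * ‖h N‖ ^ 2 := by
      rw [← real_inner_self_eq_norm_sq, ← real_inner_self_eq_norm_sq,
        ← real_inner_self_eq_norm_sq]
      simp only [inner_add_add_self, inner_smul_left, inner_smul_right,
        real_inner_comm a (h N), RCLike.conj_to_real]
      ring
    have hσ2 : σ ^ 2 = 1 := by rcases hσ1 with h1 | h1 <;> rw [h1] <;> ring
    rw [Finset.sum_range_succ, expand, hσ2]
    nlinarith [hkey]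

set_option maxHeartbeats 1000000 in
/-- There exist a real Banach space `E` and a null sequence in `E` whose range is not
contained in any ellipsoid (image of the closed unit ball of a real Hilbert space under
a continuous linear map into `E`). -/
theorem exists_banach_null_sequence_not_in_ellipsoid :
    ∃ (E : Type) (_ : NormedAddCommGroup E) (_ : NormedSpace ℝ E) (_ : CompleteSpace E)
      (x : ℕ → E),
      Filter.Tendsto x Filter.atTop (nhds (0 : E)) ∧
      ∀ (H : Type) (_ : NormedAddCommGroup H) (_ : InnerProductSpace ℝ H)
        (_ : CompleteSpace H) (T : H →L[ℝ] E),
        ¬ (Set.range x ⊆ T '' Metric.closedBall (0 : H) 1) := by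
  classical
  set c : ℕ → ℝ := fun n => 1 / Real.log (n + 2) with hc
  have hlog : ∀ n : ℕ, Real.log 2 ≤ Real.log (n + 2) := by
    intro n
    apply Real.log_le_log (by norm_num)
    have : (0 : ℝ) ≤ n := Nat.cast_nonneg n
    linarith
  have hlogpos : ∀ n : ℕ, 0 < Real.log (n + 2) := fun n =>
    lt_of_lt_of_le (Real.log_pos (by norm_num)) (hlog n)
  have hcpos : ∀ n, 0 < c n := fun n => div_pos one_pos (hlogpos n)
  set x : ℕ → lp (fun _ : ℕ => ℝ) 1 := fun n => lp.single 1 n (c n) with hx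
  refine ⟨lp (fun _ : ℕ => ℝ) 1, inferInstance, inferInstance, inferInstance, x, ?_, ?_⟩
  · rw [tendsto_zero_iff_norm_tendsto_zero]
    have hnorm : ∀ n, ‖x n‖ = c n := by
      intro n
      have := lp.norm_single (p := (1 : ℝ≥0∞)) (E := fun _ : ℕ => ℝ) (by norm_num) n (c n)
      simpa [hx, Real.norm_eq_abs, abs_of_pos (hcpos n)] using this
    simp only [hnorm]
    have : Tendsto (fun n : ℕ => Real.log (n + 2)) atTop atTop := by
      apply Real.tendsto_log_atTop.comp
      apply tendsto_atTop_add_const_right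
      exact tendsto_natCast_atTop_atTop
    simpa [hc, one_div, Pi.inv_def] using this.inv_tendsto_atTop
  · intro H _ _ _ T hsub
    have hpre : ∀ n : ℕ, ∃ h : H, ‖h‖ ≤ 1 ∧ T h = x n := by
      intro n
      obtain ⟨h, hh, hTh⟩ := hsub ⟨n, rfl⟩
      exact ⟨h, by simpa [Metric.mem_closedBall, dist_eq_norm] using hh, hTh⟩
    choose h hh1 hTh using hpre
    have key : ∀ N : ℕ, (N : ℝ) / Real.log (N + 2) ≤ ‖T‖ * Real.sqrt N := by
      intro N
      obtain ⟨ε, hε1, hεle⟩ := exists_signs h N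
      set g := ∑ i ∈ range N, ε i • h i with hg
      have hgnorm : ‖g‖ ≤ Real.sqrt N := by
        have h1 : ‖g‖ ^ 2 ≤ (N : ℝ) := by
          refine hεle.trans ?_
          calc ∑ i ∈ range N, ‖h i‖ ^ 2 ≤ ∑ i ∈ range N, (1 : ℝ) := by
                refine Finset.sum_le_sum fun i _ => ?_
                nlinarith [hh1 i, norm_nonneg (h i)]
            _ = N := by simp
        nlinarith [Real.sq_sqrt (Nat.cast_nonneg (N : ℕ) : (0:ℝ) ≤ N), norm_nonneg g,
          Real.sqrt_nonneg (N : ℝ)]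
      have hTg : T g = ∑ i ∈ range N, lp.single 1 i (ε i * c i) := by
        rw [hg, map_sum]
        refine Finset.sum_congr rfl fun i _ => ?_
        rw [map_smul, hTh i, hx]
        rw [← lp.single_smul]
        norm_num [smul_eq_mul]
      have hlower : ∑ i ∈ range N, c i ≤ ‖T g‖ := by
        have hns := lp.norm_sum_single (p := (1 : ℝ≥0∞)) (E := fun _ : ℕ => ℝ) (by norm_num)
          (fun i => ε i * c i) (range N)
        rw [hTg]
        have habs : ∀ i, ‖ε i * c i‖ = c i := by
          intro i
          rcases hε1 i with h1 | h1 <;>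
            simp [h1, Real.norm_eq_abs, abs_of_pos (hcpos i), abs_of_nonneg (hcpos i).le]
        simp only [ENNReal.toReal_one, Real.rpow_one] at hns
        rw [hns]
        exact le_of_eq (Finset.sum_congr rfl fun i _ => (habs i).symm)
      have hupper : ‖T g‖ ≤ ‖T‖ * Real.sqrt N :=
        (T.le_opNorm g).trans (mul_le_mul_of_nonneg_left hgnorm (norm_nonneg T))
      refine le_trans ?_ (hlower.trans hupper)
      have hdiv : (N : ℝ) / Real.log (N + 2) = ∑ _i ∈ range N, 1 / Real.log (N + 2) := by
        simp [div_eq_mul_inv, mul_comm]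
      rw [hdiv]
      refine Finset.sum_le_sum fun i hi => ?_
      rw [hc]
      apply one_div_le_one_div_of_le (hlogpos i)
      apply Real.log_le_log (by positivity)
      have : (i : ℝ) ≤ N := Nat.cast_le.mpr (Finset.mem_range.mp hi).le
      linarith
    obtain ⟨C, hC0, key'⟩ : ∃ C : ℝ, 0 ≤ C ∧
        ∀ N : ℕ, (N : ℝ) / Real.log (N + 2) ≤ C * Real.sqrt N :=
      ⟨‖T‖, norm_nonneg T, key⟩
    clear key hTh hh1 hsub T h
    have hlittle := isLittleO_log_rpow_atTop (r := (1/2 : ℝ)) (by norm_num)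
    rw [Asymptotics.isLittleO_iff] at hlittle
    have hc0 : (0 : ℝ) < 1 / (2 * (C + 1)) := by positivity
    have hev := hlittle hc0
    rw [Filter.eventually_atTop] at hev
    obtain ⟨t₀, ht₀⟩ := hev
    obtain ⟨N, hN1, hN2⟩ : ∃ N : ℕ, t₀ ≤ (N : ℝ) ∧ 2 ≤ N := by
      obtain ⟨N, hN⟩ := exists_nat_ge t₀
      exact ⟨max N 2, le_trans hN (by exact_mod_cast Nat.le_max_left N 2), Nat.le_max_right N 2⟩
    have hNpos : (0 : ℝ) < N := by
      have : 0 < N := Nat.lt_of_lt_of_le (by norm_num) hN2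
      exact_mod_cast this
    have hkey := key' N
    have hlogN := ht₀ ((N : ℝ) + 2) (by linarith)
    have hN2pos : (0 : ℝ) < (N : ℝ) + 2 := by linarith
    rw [Real.norm_eq_abs, Real.norm_eq_abs, abs_of_pos (hlogpos N),
      abs_of_pos (Real.rpow_pos_of_pos hN2pos _)] at hlogN
    have hsq : ((N : ℝ) + 2) ^ (1/2 : ℝ) = Real.sqrt ((N : ℝ) + 2) :=
      (Real.sqrt_eq_rpow _).symm
    rw [hsq] at hlogN
    have h2N : Real.sqrt ((N : ℝ) + 2) ≤ Real.sqrt 2 * Real.sqrt N := by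
      rw [← Real.sqrt_mul (by norm_num : (0:ℝ) ≤ 2)]
      apply Real.sqrt_le_sqrt
      have : (2 : ℝ) ≤ N := by exact_mod_cast hN2
      linarith
    set s := Real.sqrt N with hs
    have hspos : 0 < s := Real.sqrt_pos.mpr hNpos
    have hss : s * s = (N : ℝ) := Real.mul_self_sqrt (Nat.cast_nonneg N)
    have h1 : (N : ℝ) ≤ C * s * Real.log (N + 2) := by
      have := (div_le_iff₀ (hlogpos N)).mp hkey
      linarith [this]
    have hlog2 : Real.log ((N : ℝ) + 2) ≤ (1 / (2 * (C + 1))) * (Real.sqrt 2 * s) := by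
      calc Real.log ((N : ℝ) + 2) ≤ 1 / (2 * (C + 1)) * Real.sqrt ((N : ℝ) + 2) := hlogN
        _ ≤ (1 / (2 * (C + 1))) * (Real.sqrt 2 * s) := by
            apply mul_le_mul_of_nonneg_left h2N (by positivity)
    have hsqrt2 : Real.sqrt 2 ≤ 1.5 := by
      nlinarith [Real.sq_sqrt (by norm_num : (0:ℝ) ≤ 2), Real.sqrt_nonneg 2]
    have hTnn : 0 ≤ C := hC0
    have h3 : (N : ℝ) ≤ C / (2 * (C + 1)) * Real.sqrt 2 * (N : ℝ) := by
      calc (N : ℝ) ≤ C * s * Real.log (N + 2) := h1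
        _ ≤ C * s * ((1 / (2 * (C + 1))) * (Real.sqrt 2 * s)) := by
            apply mul_le_mul_of_nonneg_left hlog2 (by positivity)
        _ = C / (2 * (C + 1)) * Real.sqrt 2 * (s * s) := by ring
        _ = C / (2 * (C + 1)) * Real.sqrt 2 * (N : ℝ) := by rw [hss]
    have hfrac : C / (2 * (C + 1)) * Real.sqrt 2 < 1 := by
      have h4 : C / (2 * (C + 1)) < 1/2 := by
        rw [div_lt_iff₀ (by positivity)]
        linarith
      nlinarith [Real.sqrt_nonneg 2]
    nlinarith [h3, hfrac, hNpos]
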